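/- Let $\mathcal{F}, \mathcal{G} \subseteq 2^{[n]}$ be cross-Sperner families. Then $|\mathcal{F}|^{1/2} + |\mathcal{G}|^{1/2} \leq 2^{n/2}$. -/

import Mathlib

lemma sqrt_cs_aux (N u d : ℝ) (hu0 : 0 ≤ u) (hd0 : 0 ≤ d) (huN : u ≤ N) (hdN : d ≤ N) :
    Real.sqrt (u * d) + Real.sqrt ((N - u) * (N - d)) ≤ N := by
  have hud0 : 0 ≤ u * d := mul_nonneg hu0 hd0
  have hNuNd0 : 0 ≤ (N - u) * (N - d) := mul_nonneg (by linarith) (by linarith)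
  set s1 := Real.sqrt (u * d) with hs1
  set s2 := Real.sqrt ((N - u) * (N - d)) with hs2
  have hs1sq : s1 ^ 2 = u * d := Real.sq_sqrt hud0
  have hs2sq : s2 ^ 2 = (N - u) * (N - d) := Real.sq_sqrt hNuNd0
  have hs10 : 0 ≤ s1 := Real.sqrt_nonneg _
  have hs20 : 0 ≤ s2 := Real.sqrt_nonneg _
  have hcross : s1 * s2 ≤ (u * (N - d) + d * (N - u)) / 2 := by
    rw [hs1, hs2, ← Real.sqrt_mul hud0]
    calc Real.sqrt (u * d * ((N - u) * (N - d)))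
        ≤ Real.sqrt (((u * (N - d) + d * (N - u)) / 2) ^ 2) := by
          apply Real.sqrt_le_sqrt
          nlinarith [sq_nonneg (u * (N - d) - d * (N - u))]
      _ = (u * (N - d) + d * (N - u)) / 2 := by
          rw [Real.sqrt_sq (by nlinarith : (0:ℝ) ≤ (u * (N - d) + d * (N - u)) / 2)]
  have hsq : (s1 + s2) ^ 2 ≤ N ^ 2 := by nlinarith
  nlinarith [hsq, hs10, hs20]

theorem cross_sperner_counting (n : ℕ) (F G : Finset (Finset (Fin n)))
    (hCS : ∀ A ∈ F, ∀ B ∈ G, ¬ A ⊆ B ∧ ¬ B ⊆ A) :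
    Real.sqrt F.card + Real.sqrt G.card ≤ Real.sqrt (2 ^ n) := by
  classical
  set U : Finset (Finset (Fin n)) := Finset.univ.filter (fun S => ∃ A ∈ F, A ⊆ S) with hUdef
  set D : Finset (Finset (Fin n)) := Finset.univ.filter (fun S => ∃ A ∈ F, S ⊆ A) with hDdef
  have hU : IsUpperSet (U : Set (Finset (Fin n))) := by
    intro s t hst hs
    simp only [hUdef, Finset.coe_filter, Set.mem_setOf_eq, Finset.mem_univ, true_and] at hs ⊢
    obtain ⟨A, hA, hAs⟩ := hs
    exact ⟨A, hA, hAs.trans hst⟩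
  have hD : IsLowerSet (D : Set (Finset (Fin n))) := by
    intro s t hst hs
    simp only [hDdef, Finset.coe_filter, Set.mem_setOf_eq, Finset.mem_univ, true_and] at hs ⊢
    obtain ⟨A, hA, hAs⟩ := hs
    exact ⟨A, hA, hst.trans hAs⟩
  have hHK : 2 ^ n * (U ∩ D).card ≤ U.card * D.card := by
    have := hU.card_inter_le_finset hD
    simpa using this
  have hFsub : F ⊆ U ∩ D := by
    intro A hA
    simp only [Finset.mem_inter, hUdef, hDdef, Finset.mem_filter, Finset.mem_univ, true_and]
    exact ⟨⟨A, hA, subset_rfl⟩, ⟨A, hA, subset_rfl⟩⟩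
  have hGdisj : Disjoint G (U ∪ D) := by
    rw [Finset.disjoint_left]
    intro B hB hBU
    rcases Finset.mem_union.1 hBU with h | h
    · simp only [hUdef, Finset.mem_filter, Finset.mem_univ, true_and] at h
      obtain ⟨A, hA, hAB⟩ := h
      exact (hCS A hA B hB).1 hAB
    · simp only [hDdef, Finset.mem_filter, Finset.mem_univ, true_and] at h
      obtain ⟨A, hA, hBA⟩ := h
      exact (hCS A hA B hB).2 hBA
  -- cardinal bounds
  have hGcard : G.card + (U ∪ D).card ≤ 2 ^ n := by
    rw [← Finset.card_union_of_disjoint hGdisj]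
    calc (G ∪ (U ∪ D)).card ≤ (Finset.univ : Finset (Finset (Fin n))).card :=
          Finset.card_le_card (Finset.subset_univ _)
      _ = 2 ^ n := by simp [Finset.card_univ]
  have hUD : (U ∪ D).card + (U ∩ D).card = U.card + D.card :=
    Finset.card_union_add_card_inter U D
  -- pass to the reals
  set N : ℝ := (2 : ℝ) ^ n with hN
  set u : ℝ := (U.card : ℝ)
  set d : ℝ := (D.card : ℝ)
  set i : ℝ := ((U ∩ D).card : ℝ)
  set f : ℝ := (F.card : ℝ)
  set g : ℝ := (G.card : ℝ)
  have hf0 : 0 ≤ f := Nat.cast_nonneg _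
  have hg0 : 0 ≤ g := Nat.cast_nonneg _
  have hN0 : (0 : ℝ) < N := by positivity
  have huN : u ≤ N := by
    have : U.card ≤ 2 ^ n := by
      calc U.card ≤ (Finset.univ : Finset (Finset (Fin n))).card :=
            Finset.card_le_card (Finset.subset_univ _)
        _ = 2 ^ n := by simp [Finset.card_univ]
    exact_mod_cast (by exact_mod_cast this : (U.card : ℝ) ≤ ((2 ^ n : ℕ) : ℝ)).trans_eq (by push_cast; ring)
  have hdN : d ≤ N := by
    have : D.card ≤ 2 ^ n := by
      calc D.card ≤ (Finset.univ : Finset (Finset (Fin n))).card :=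
            Finset.card_le_card (Finset.subset_univ _)
        _ = 2 ^ n := by simp [Finset.card_univ]
    exact_mod_cast (by exact_mod_cast this : (D.card : ℝ) ≤ ((2 ^ n : ℕ) : ℝ)).trans_eq (by push_cast; ring)
  have hHKr : N * i ≤ u * d := by
    have := hHK
    have : ((2 ^ n * (U ∩ D).card : ℕ) : ℝ) ≤ ((U.card * D.card : ℕ) : ℝ) := by exact_mod_cast this
    push_cast at this
    simpa [hN] using this
  have hfi : f ≤ i := Nat.cast_le.mpr (Finset.card_le_card hFsub)
  have hNf : N * f ≤ u * d := le_trans (by nlinarith) hHKr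
  have hNg : N * g ≤ (N - u) * (N - d) := by
    have h1 : g + (u + d - i) ≤ N := by
      have h2 : ((U ∪ D).card : ℝ) = u + d - i := by
        have := hUD
        have : (((U ∪ D).card + (U ∩ D).card : ℕ) : ℝ) = ((U.card + D.card : ℕ) : ℝ) := by
          exact_mod_cast this
        push_cast at this
        linarith
      have h3 : ((G.card + (U ∪ D).card : ℕ) : ℝ) ≤ ((2 ^ n : ℕ) : ℝ) := by exact_mod_cast hGcard
      push_cast at h3
      rw [h2] at h3
      simpa [hN] using h3
    nlinarith
  -- now the sqrt computation
  have hsqN : (0 : ℝ) < Real.sqrt N := Real.sqrt_pos.2 hN0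
  rw [← mul_le_mul_iff_right₀ hsqN, mul_add, Real.mul_self_sqrt hN0.le,
    ← Real.sqrt_mul hN0.le f, ← Real.sqrt_mul hN0.le g]
  have hud0 : 0 ≤ u * d := by positivity
  have hNuNd0 : 0 ≤ (N - u) * (N - d) := mul_nonneg (by linarith) (by linarith)
  have h1 : Real.sqrt (N * f) ≤ Real.sqrt (u * d) := Real.sqrt_le_sqrt hNf
  have h2 : Real.sqrt (N * g) ≤ Real.sqrt ((N - u) * (N - d)) := Real.sqrt_le_sqrt hNg
  have key : Real.sqrt (u * d) + Real.sqrt ((N - u) * (N - d)) ≤ N :=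
    sqrt_cs_aux N u d (Nat.cast_nonneg _) (Nat.cast_nonneg _) huN hdN
  linarith
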